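/- The bivariate logistic extreme value distribution is 2-increasing (assigns nonnegative mass to rectangles): for every 0 < α ≤ 1 and all 0 < a₁ ≤ b₁ and 0 < a₂ ≤ b₂, G_α(b₁, b₂) − G_α(a₁, b₂) − G_α(b₁, a₂) + G_α(a₁, a₂) ≥ 0, where G_α(x, y) = exp(−((1/x)^{1/α} + (1/y)^{1/α})^{α}). -/

import Mathlib

open Real

lemma hd_aux (α c x : ℝ) (h : 0 < x + c) :
    HasDerivAt (fun y => Real.exp (-((y + c) ^ α)))
      (-(α * (x + c) ^ (α - 1)) * Real.exp (-((x + c) ^ α))) x := by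
  have h1 : HasDerivAt (fun y : ℝ => y + c) 1 x := (hasDerivAt_id x).add_const c
  have h2 : HasDerivAt (fun y : ℝ => (y + c) ^ α) (α * (x + c) ^ (α - 1) * 1) x :=
    by have := (Real.hasDerivAt_rpow_const (x := x + c) (p := α) (Or.inl h.ne')).comp x h1; exact this
  have h4 := h2.neg.exp
  convert h4 using 1
  · rfl
  simp only [Pi.neg_apply]; ring

lemma key_lemma (α s t u v : ℝ) (hα0 : 0 < α) (hα1 : α ≤ 1) (hv : 0 < v) (hvu : v ≤ u)
    (ht : 0 < t) (hts : t ≤ s) :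
    Real.exp (-((s + v) ^ α)) - Real.exp (-((s + u) ^ α)) ≤
      Real.exp (-((t + v) ^ α)) - Real.exp (-((t + u) ^ α)) := by
  set f : ℝ → ℝ := fun y => Real.exp (-((y + v) ^ α)) - Real.exp (-((y + u) ^ α)) with hf
  have hder : ∀ x, t ≤ x → HasDerivAt f
      (-(α * (x + v) ^ (α - 1)) * Real.exp (-((x + v) ^ α))
        - -(α * (x + u) ^ (α - 1)) * Real.exp (-((x + u) ^ α))) x := by
    intro x hx
    have hxv : 0 < x + v := by linarith
    have hxu : 0 < x + u := by linarith
    exact (hd_aux α v x hxv).sub (hd_aux α u x hxu)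
  have hanti : AntitoneOn f (Set.Icc t s) := by
    apply antitoneOn_of_deriv_nonpos (convex_Icc t s)
    · exact fun x hx => ((hder x hx.1).continuousAt).continuousWithinAt
    · intro x hx
      rw [interior_Icc] at hx
      exact ((hder x hx.1.le).differentiableAt).differentiableWithinAt
    · intro x hx
      rw [interior_Icc] at hx
      have hxv : 0 < x + v := by linarith [hx.1]
      have hxu : 0 < x + u := by linarith [hx.1]
      rw [(hder x hx.1.le).deriv]
      have h1 : (x + u) ^ (α - 1) ≤ (x + v) ^ (α - 1) :=
        Real.rpow_le_rpow_of_nonpos hxv (by linarith) (by linarith)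
      have h2 : Real.exp (-((x + u) ^ α)) ≤ Real.exp (-((x + v) ^ α)) := by
        apply Real.exp_le_exp.2
        apply neg_le_neg
        exact Real.rpow_le_rpow hxv.le (by linarith) hα0.le
      have h3 : α * (x + u) ^ (α - 1) * Real.exp (-((x + u) ^ α))
          ≤ α * (x + v) ^ (α - 1) * Real.exp (-((x + v) ^ α)) := by
        apply mul_le_mul _ h2 (Real.exp_pos _).le
        · positivity
        · exact mul_le_mul_of_nonneg_left h1 hα0.le
      linarith
  have := hanti (Set.left_mem_Icc.2 hts) (Set.right_mem_Icc.2 hts) hts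
  simpa [hf] using this

/-- The bivariate logistic extreme value distribution
`G_α(x, y) = exp(−((1/x)^(1/α) + (1/y)^(1/α))^α)` is 2-increasing: for every
0 < α ≤ 1 and all 0 < a₁ ≤ b₁, 0 < a₂ ≤ b₂,
`G_α(b₁, b₂) − G_α(a₁, b₂) − G_α(b₁, a₂) + G_α(a₁, a₂) ≥ 0`. -/
theorem logistic_bev_two_increasing (α a₁ b₁ a₂ b₂ : ℝ) (hα0 : 0 < α) (hα1 : α ≤ 1)
    (ha₁ : 0 < a₁) (hab₁ : a₁ ≤ b₁) (ha₂ : 0 < a₂) (hab₂ : a₂ ≤ b₂) :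
    0 ≤ Real.exp (-(((1 / b₁) ^ (1 / α) + (1 / b₂) ^ (1 / α)) ^ α))
      - Real.exp (-(((1 / a₁) ^ (1 / α) + (1 / b₂) ^ (1 / α)) ^ α))
      - Real.exp (-(((1 / b₁) ^ (1 / α) + (1 / a₂) ^ (1 / α)) ^ α))
      + Real.exp (-(((1 / a₁) ^ (1 / α) + (1 / a₂) ^ (1 / α)) ^ α)) := by
  have hb₁ : 0 < b₁ := lt_of_lt_of_le ha₁ hab₁
  have hb₂ : 0 < b₂ := lt_of_lt_of_le ha₂ hab₂
  have ht : (0:ℝ) < (1 / b₁) ^ (1 / α) := Real.rpow_pos_of_pos (by positivity) _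
  have hv : (0:ℝ) < (1 / b₂) ^ (1 / α) := Real.rpow_pos_of_pos (by positivity) _
  have hts : (1 / b₁) ^ (1 / α) ≤ (1 / a₁) ^ (1 / α) :=
    Real.rpow_le_rpow (by positivity) (by gcongr) (by positivity)
  have hvu : (1 / b₂) ^ (1 / α) ≤ (1 / a₂) ^ (1 / α) :=
    Real.rpow_le_rpow (by positivity) (by gcongr) (by positivity)
  have := key_lemma α ((1 / a₁) ^ (1 / α)) ((1 / b₁) ^ (1 / α))
    ((1 / a₂) ^ (1 / α)) ((1 / b₂) ^ (1 / α)) hα0 hα1 hv hvu ht hts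
  linarith
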